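/- Let v₁, v₂, v₃ and w₁, w₂, w₃ be vectors in ℂ² such that v₁, v₂, v₃ span ℂ². Write det(x, y) for the determinant of the 2×2 matrix with columns x, y. If det(v₁, v₂) = det(w₁, w₂), det(v₁, v₃) = det(w₁, w₃), and det(v₂, v₃) = det(w₂, w₃), then there exists a unique g ∈ SL(2, ℂ) with wᵢ = g·vᵢ for i = 1, 2, 3. -/

import Mathlib

open Matrix

/-- `det₂ x y` is the determinant of the `2×2` matrix with columns `x` and `y`. -/
def det₂ (x y : Fin 2 → ℂ) : ℂ := Matrix.det !![x 0, y 0; x 1, y 1]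

lemma det₂_eq (x y : Fin 2 → ℂ) : det₂ x y = x 0 * y 1 - y 0 * x 1 := by
  simp [det₂, Matrix.det_fin_two_of]

lemma det₂_antisymm (x y : Fin 2 → ℂ) : det₂ y x = -det₂ x y := by
  simp only [det₂_eq]; ring

lemma mem_span_of_det₂ (x y : Fin 2 → ℂ) (hx : x ≠ 0) (h : det₂ x y = 0) :
    y ∈ Submodule.span ℂ {x} := by
  rw [det₂_eq] at h
  rw [Submodule.mem_span_singleton]
  by_cases h0 : x 0 ≠ 0
  · refine ⟨y 0 / x 0, ?_⟩
    funext i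
    fin_cases i
    · simp; field_simp
    · simp; field_simp; linear_combination -h
  · have h1 : x 1 ≠ 0 := by
      intro h1
      apply hx; funext i; fin_cases i <;> simp_all
    push_neg at h0
    refine ⟨y 1 / x 1, ?_⟩
    funext i
    fin_cases i
    · simp; field_simp; rw [h0] at h ⊢; linear_combination h
    · simp; field_simp

lemma key (v₁ v₂ v₃ w₁ w₂ w₃ : Fin 2 → ℂ) (hd : det₂ v₁ v₂ ≠ 0)
    (h12 : det₂ v₁ v₂ = det₂ w₁ w₂)
    (h13 : det₂ v₁ v₃ = det₂ w₁ w₃)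
    (h23 : det₂ v₂ v₃ = det₂ w₂ w₃) :
    ∃ g : Matrix.SpecialLinearGroup (Fin 2) ℂ,
      w₁ = (g : Matrix (Fin 2) (Fin 2) ℂ).mulVec v₁ ∧
      w₂ = (g : Matrix (Fin 2) (Fin 2) ℂ).mulVec v₂ ∧
      w₃ = (g : Matrix (Fin 2) (Fin 2) ℂ).mulVec v₃ := by
  set d := det₂ v₁ v₂ with hdd
  rw [det₂_eq] at hdd
  have hw : det₂ w₁ w₂ = d := h12.symm
  rw [det₂_eq] at hw
  have h13' := h13; rw [det₂_eq, det₂_eq] at h13'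
  have h23' := h23; rw [det₂_eq, det₂_eq] at h23'
  set A : Matrix (Fin 2) (Fin 2) ℂ :=
    !![(w₁ 0 * v₂ 1 - w₂ 0 * v₁ 1)/d, (w₂ 0 * v₁ 0 - w₁ 0 * v₂ 0)/d;
       (w₁ 1 * v₂ 1 - w₂ 1 * v₁ 1)/d, (w₂ 1 * v₁ 0 - w₁ 1 * v₂ 0)/d] with hA
  have hdet : A.det = 1 := by
    rw [hA, Matrix.det_fin_two_of]
    field_simp
    linear_combination (v₁ 0 * v₂ 1 - v₂ 0 * v₁ 1) * hw - d * hdd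
  have comp : ∀ (x : Fin 2 → ℂ) (i : Fin 2),
      (A.mulVec x) i = (A i 0 * x 0 + A i 1 * x 1) := by
    intro x i
    simp [Matrix.mulVec, dotProduct, Fin.sum_univ_two]
  have entry : ∀ i j : Fin 2, A i j =
      !![(w₁ 0 * v₂ 1 - w₂ 0 * v₁ 1)/d, (w₂ 0 * v₁ 0 - w₁ 0 * v₂ 0)/d;
         (w₁ 1 * v₂ 1 - w₂ 1 * v₁ 1)/d, (w₂ 1 * v₁ 0 - w₁ 1 * v₂ 0)/d] i j := by
    intro i j; rw [hA]
  refine ⟨⟨A, hdet⟩, ?_, ?_, ?_⟩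
  · funext i
    rw [Matrix.SpecialLinearGroup.coe_mk, comp, entry, entry]
    fin_cases i
    · simp only [Matrix.cons_val', Matrix.cons_val_zero, Matrix.cons_val_one, Matrix.head_cons,
        Matrix.empty_val', Matrix.cons_val_fin_one, Matrix.head_fin_const, Fin.zero_eta, Fin.mk_one,
        Matrix.of_apply]
      field_simp
      linear_combination w₁ 0 * hdd
    · simp only [Matrix.cons_val', Matrix.cons_val_zero, Matrix.cons_val_one, Matrix.head_cons,
        Matrix.empty_val', Matrix.cons_val_fin_one, Matrix.head_fin_const, Fin.zero_eta, Fin.mk_one,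
        Matrix.of_apply]
      field_simp
      linear_combination w₁ 1 * hdd
  · funext i
    rw [Matrix.SpecialLinearGroup.coe_mk, comp, entry, entry]
    fin_cases i
    · simp only [Matrix.cons_val', Matrix.cons_val_zero, Matrix.cons_val_one, Matrix.head_cons,
        Matrix.empty_val', Matrix.cons_val_fin_one, Matrix.head_fin_const, Fin.zero_eta, Fin.mk_one,
        Matrix.of_apply]
      field_simp
      linear_combination w₂ 0 * hdd
    · simp only [Matrix.cons_val', Matrix.cons_val_zero, Matrix.cons_val_one, Matrix.head_cons,
        Matrix.empty_val', Matrix.cons_val_fin_one, Matrix.head_fin_const, Fin.zero_eta, Fin.mk_one,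
        Matrix.of_apply]
      field_simp
      linear_combination w₂ 1 * hdd
  · funext i
    rw [Matrix.SpecialLinearGroup.coe_mk, comp, entry, entry]
    fin_cases i
    · simp only [Matrix.cons_val', Matrix.cons_val_zero, Matrix.cons_val_one, Matrix.head_cons,
        Matrix.empty_val', Matrix.cons_val_fin_one, Matrix.head_fin_const, Fin.zero_eta, Fin.mk_one,
        Matrix.of_apply]
      field_simp
      linear_combination (-(w₂ 0)) * h13' + w₁ 0 * h23' - w₃ 0 * hw
    · simp only [Matrix.cons_val', Matrix.cons_val_zero, Matrix.cons_val_one, Matrix.head_cons,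
        Matrix.empty_val', Matrix.cons_val_fin_one, Matrix.head_fin_const, Fin.zero_eta, Fin.mk_one,
        Matrix.of_apply]
      field_simp
      linear_combination (-(w₂ 1)) * h13' + w₁ 1 * h23' - w₃ 1 * hw

lemma some_det_ne_zero (v₁ v₂ v₃ : Fin 2 → ℂ)
    (hspan : Submodule.span ℂ {v₁, v₂, v₃} = ⊤)
    (h12 : det₂ v₁ v₂ = 0) (h13 : det₂ v₁ v₃ = 0) (h23 : det₂ v₂ v₃ = 0) : False := by
  have hxle : ∃ x : Fin 2 → ℂ, x ≠ 0 ∧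
      Submodule.span ℂ {v₁, v₂, v₃} ≤ Submodule.span ℂ {x} := by
    by_cases h1 : v₁ = 0
    · by_cases h2 : v₂ = 0
      · by_cases h3 : v₃ = 0
        · exfalso
          rw [h1, h2, h3] at hspan
          simp at hspan
        · refine ⟨v₃, h3, Submodule.span_le.2 ?_⟩
          rintro y (rfl | rfl | rfl)
          · rw [h1]; exact Submodule.zero_mem _
          · rw [h2]; exact Submodule.zero_mem _
          · exact Submodule.mem_span_singleton_self _
      · refine ⟨v₂, h2, Submodule.span_le.2 ?_⟩
        rintro y (rfl | rfl | rfl)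
        · rw [h1]; exact Submodule.zero_mem _
        · exact Submodule.mem_span_singleton_self _
        · exact mem_span_of_det₂ _ _ h2 h23
    · refine ⟨v₁, h1, Submodule.span_le.2 ?_⟩
      rintro y (rfl | rfl | rfl)
      · exact Submodule.mem_span_singleton_self _
      · exact mem_span_of_det₂ _ _ h1 h12
      · exact mem_span_of_det₂ _ _ h1 h13
  obtain ⟨x, hx, hle⟩ := hxle
  have htop : Submodule.span ℂ {x} = ⊤ := top_le_iff.1 (hspan ▸ hle)
  have h1 : Module.finrank ℂ (Submodule.span ℂ {x}) = 1 := finrank_span_singleton hx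
  rw [htop, finrank_top] at h1
  simp [Module.finrank_pi] at h1

/-- If `v₁, v₂, v₃` span `ℂ²` and `w₁, w₂, w₃` have the same three
pairwise determinants, then there is a unique `g ∈ SL(2,ℂ)` with `wᵢ = g vᵢ`. -/
theorem sl2_unique_of_equal_pairwise_dets
    (v₁ v₂ v₃ w₁ w₂ w₃ : Fin 2 → ℂ)
    (hspan : Submodule.span ℂ {v₁, v₂, v₃} = ⊤)
    (h12 : det₂ v₁ v₂ = det₂ w₁ w₂)
    (h13 : det₂ v₁ v₃ = det₂ w₁ w₃)
    (h23 : det₂ v₂ v₃ = det₂ w₂ w₃) :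
    ∃! g : Matrix.SpecialLinearGroup (Fin 2) ℂ,
      w₁ = (g : Matrix (Fin 2) (Fin 2) ℂ).mulVec v₁ ∧
      w₂ = (g : Matrix (Fin 2) (Fin 2) ℂ).mulVec v₂ ∧
      w₃ = (g : Matrix (Fin 2) (Fin 2) ℂ).mulVec v₃ := by
  have hex : ∃ g : Matrix.SpecialLinearGroup (Fin 2) ℂ,
      w₁ = (g : Matrix (Fin 2) (Fin 2) ℂ).mulVec v₁ ∧
      w₂ = (g : Matrix (Fin 2) (Fin 2) ℂ).mulVec v₂ ∧
      w₃ = (g : Matrix (Fin 2) (Fin 2) ℂ).mulVec v₃ := by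
    by_cases hd12 : det₂ v₁ v₂ ≠ 0
    · exact key v₁ v₂ v₃ w₁ w₂ w₃ hd12 h12 h13 h23
    by_cases hd13 : det₂ v₁ v₃ ≠ 0
    · obtain ⟨g, hg1, hg3, hg2⟩ := key v₁ v₃ v₂ w₁ w₃ w₂ hd13 h13 h12
        (by rw [det₂_antisymm v₂ v₃, det₂_antisymm w₂ w₃, h23])
      exact ⟨g, hg1, hg2, hg3⟩
    by_cases hd23 : det₂ v₂ v₃ ≠ 0
    · obtain ⟨g, hg2, hg3, hg1⟩ := key v₂ v₃ v₁ w₂ w₃ w₁ hd23 h23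
        (by rw [det₂_antisymm v₁ v₂, det₂_antisymm w₁ w₂, h12])
        (by rw [det₂_antisymm v₁ v₃, det₂_antisymm w₁ w₃, h13])
      exact ⟨g, hg1, hg2, hg3⟩
    push_neg at hd12 hd13 hd23
    exact absurd (some_det_ne_zero v₁ v₂ v₃ hspan hd12 hd13 hd23) not_false
  obtain ⟨g₀, hg₀⟩ := hex
  refine ⟨g₀, hg₀, ?_⟩
  rintro g ⟨e1, e2, e3⟩
  obtain ⟨f1, f2, f3⟩ := hg₀
  have hlin : Matrix.toLin' (g : Matrix (Fin 2) (Fin 2) ℂ)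
      = Matrix.toLin' (g₀ : Matrix (Fin 2) (Fin 2) ℂ) := by
    apply LinearMap.ext_on hspan
    rintro x (rfl | rfl | rfl) <;>
      rw [Matrix.toLin'_apply, Matrix.toLin'_apply]
    · rw [← e1, ← f1]
    · rw [← e2, ← f2]
    · rw [← e3, ← f3]
  exact Subtype.ext (Matrix.toLin'.injective hlin)
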